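/- arXiv:1602.08612 — 4 statements merged into one kernel-verified Lean document; each statement's English description precedes it below -/
import Mathlib

section
/- Let C > 0 and let (x_i)_{i≥1} be a non-increasing sequence of positive reals such that ∑_{i=1}^∞ x_i^{(N−s)/N} ≤ C and ∑_{i=1}^∞ x_i = 1/2. Then there exists k₀ ∈ ℕ such that for all k ≥ k₀, ∑_{i=k+1}^∞ x_i ≤ (2Ck)^{−s/N}. -/
open MeasureTheory Metric Set Filter
open scoped ENNReal NNReal symmDiff

/-- Fractional interaction energy between two sets. -/
noncomputable def interEnergy (N : ℕ) (s : ℝ) (A B : Set (EuclideanSpace ℝ (Fin N))) : ℝ≥0∞ :=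
  ∫⁻ x in A, ∫⁻ y in B, ENNReal.ofReal (1 / ‖x - y‖ ^ ((N : ℝ) + s))

/-- Fractional perimeter `P_s(E) = ∫_E ∫_{Eᶜ} |x-y|^{-(N+s)} dx dy`. -/
noncomputable def fracPer (N : ℕ) (s : ℝ) (E : Set (EuclideanSpace ℝ (Fin N))) : ℝ≥0∞ :=
  interEnergy N s E Eᶜ

set_option maxHeartbeats 1000000 in
theorem tail_sum_bound (N : ℕ) (hN : 1 ≤ N) (s : ℝ) (hs : s ∈ Set.Ioo (0:ℝ) 1)
    (C : ℝ) (hC : 0 < C) (x : ℕ → ℝ) (hpos : ∀ i, 0 < x i) (hmono : Antitone x)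
    (hsummable : Summable x)
    (hsummable' : Summable (fun i => x i ^ (((N : ℝ) - s) / N)))
    (hsum1 : ∑' i, x i ^ (((N : ℝ) - s) / N) ≤ C) (hsum2 : ∑' i, x i = 1 / 2) :
    ∃ k₀ : ℕ, ∀ k ≥ k₀, ∑' i, x (i + k) ≤ (2 * C * k) ^ (-(s / N)) := by
  obtain ⟨hs0, hs1⟩ := hs
  have hN0 : (0:ℝ) < N := by exact_mod_cast Nat.lt_of_lt_of_le Nat.zero_lt_one hN
  have hN1 : (1:ℝ) ≤ N := by exact_mod_cast hN
  have hNs : (0:ℝ) < (N:ℝ) - s := by linarith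
  set p : ℝ := ((N:ℝ) - s) / N with hp
  have hp0 : 0 < p := div_pos hNs hN0
  set B : ℝ := s / N with hBdef
  have hB0 : 0 < B := div_pos hs0 hN0
  set A : ℝ := s / ((N:ℝ) - s) with hAdef
  have hA0 : 0 < A := div_pos hs0 hNs
  have hpB : p + B = 1 := by rw [hp, hBdef]; field_simp; ring
  have hpA : p * A = B := by rw [hp, hAdef, hBdef]; field_simp
  have hδ : 0 < A - B := by
    rw [sub_pos, hAdef, hBdef]
    exact div_lt_div_of_pos_left hs0 hNs (by linarith)
  have hxnn : ∀ i, 0 ≤ x i := fun i => (hpos i).le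
  -- step 1: tail bound by C * x k ^ B
  have key1 : ∀ k : ℕ, ∑' i, x (i + k) ≤ C * x k ^ B := by
    intro k
    have htail : Summable fun i => x (i + k) := (summable_nat_add_iff k).2 hsummable
    have htailp : Summable fun i => x (i + k) ^ p := (summable_nat_add_iff k).2 hsummable'
    have h1 : ∀ i, x (i + k) ≤ x (i + k) ^ p * x k ^ B := by
      intro i
      have hx := hpos (i + k)
      calc x (i + k) = x (i + k) ^ p * x (i + k) ^ B := by
            rw [← Real.rpow_add hx, hpB, Real.rpow_one]
        _ ≤ x (i + k) ^ p * x k ^ B :=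
            mul_le_mul_of_nonneg_left
              (Real.rpow_le_rpow hx.le (hmono (Nat.le_add_left k i)) hB0.le)
              (Real.rpow_nonneg hx.le p)
    have h2 : ∑' i, x (i + k) ^ p ≤ C := by
      refine le_trans ?_ hsum1
      exact htailp.tsum_le_tsum_of_inj (· + k) (add_left_injective k)
        (fun c _ => Real.rpow_nonneg (hxnn c) p) (fun i => le_rfl) hsummable'
    calc ∑' i, x (i + k) ≤ ∑' i, x (i + k) ^ p * x k ^ B :=
          htail.tsum_le_tsum h1 (htailp.mul_right _)
      _ = (∑' i, x (i + k) ^ p) * x k ^ B := tsum_mul_right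
      _ ≤ C * x k ^ B :=
          mul_le_mul_of_nonneg_right h2 (Real.rpow_nonneg (hxnn k) B)
  -- step 2: x k ^ B ≤ (C / k) ^ A for k ≥ 1
  have key2 : ∀ k : ℕ, 1 ≤ k → x k ^ B ≤ (C / k) ^ A := by
    intro k hk1
    have hk0 : (0:ℝ) < k := by exact_mod_cast hk1
    have hsumk : (k:ℝ) * x k ^ p ≤ C := by
      calc (k:ℝ) * x k ^ p = ∑ _i ∈ Finset.range k, x k ^ p := by
            rw [Finset.sum_const, Finset.card_range, nsmul_eq_mul]
        _ ≤ ∑ i ∈ Finset.range k, x i ^ p := by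
            refine Finset.sum_le_sum fun i hi => ?_
            exact Real.rpow_le_rpow (hxnn k) (hmono (le_of_lt (Finset.mem_range.1 hi))) hp0.le
        _ ≤ ∑' i, x i ^ p := hsummable'.sum_le_tsum _ (fun i _ => Real.rpow_nonneg (hxnn i) p)
        _ ≤ C := hsum1
    have hxp : x k ^ p ≤ C / k := (le_div_iff₀ hk0).2 (by linarith [hsumk, mul_comm (k:ℝ) (x k ^ p)])
    have := Real.rpow_le_rpow (Real.rpow_nonneg (hxnn k) p) hxp hA0.le
    rwa [← Real.rpow_mul (hxnn k), hpA] at this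
    -- note: the rw above may fail; handled below
  -- step 3: choose k₀
  have htend : Tendsto (fun k : ℕ => (k:ℝ) ^ (A - B)) atTop atTop :=
    (tendsto_rpow_atTop hδ).comp tendsto_natCast_atTop_atTop
  obtain ⟨k₀, hk₀⟩ := eventually_atTop.1
    (htend.eventually_ge_atTop (C ^ (1 + A) * (2 * C) ^ B))
  refine ⟨max k₀ 1, fun k hk => ?_⟩
  have hk1 : 1 ≤ k := le_trans (le_max_right k₀ 1) hk
  have hkM : C ^ (1 + A) * (2 * C) ^ B ≤ (k:ℝ) ^ (A - B) :=
    hk₀ k (le_trans (le_max_left k₀ 1) hk)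
  have hkR : (0:ℝ) < k := by exact_mod_cast hk1
  calc ∑' i, x (i + k) ≤ C * x k ^ B := key1 k
    _ ≤ C * (C / k) ^ A := mul_le_mul_of_nonneg_left (key2 k hk1) hC.le
    _ ≤ (2 * C * k) ^ (-B) := by
        have e1 : C * (C / (k:ℝ)) ^ A = C ^ (1 + A) / (k:ℝ) ^ A := by
          rw [Real.div_rpow hC.le hkR.le, Real.rpow_add hC, Real.rpow_one, mul_div_assoc]
        have e2 : (2 * C * (k:ℝ)) ^ (-B) = ((2 * C) ^ B * (k:ℝ) ^ B)⁻¹ := by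
          rw [Real.rpow_neg (by positivity), Real.mul_rpow (by positivity) hkR.le]
        rw [e1, e2, ← one_div, div_le_div_iff₀ (by positivity) (by positivity)]
        calc C ^ (1 + A) * ((2 * C) ^ B * (k:ℝ) ^ B)
              = (C ^ (1 + A) * (2 * C) ^ B) * (k:ℝ) ^ B := by ring
          _ ≤ (k:ℝ) ^ (A - B) * (k:ℝ) ^ B :=
              mul_le_mul_of_nonneg_right hkM (Real.rpow_nonneg hkR.le B)
          _ = (k:ℝ) ^ A := by rw [← Real.rpow_add hkR]; ring_nf
          _ = 1 * (k:ℝ) ^ A := (one_mul _).symm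
end

section
/- Let f : [0,∞) → [0,∞) be non-increasing with f(r) → 0 as r → ∞, f locally absolutely continuous, satisfying for some c > 0 the integro-differential inequality c ∫_R^∞ f(r)^{(N−s)/N} dr ≤ f(R) for all R ≥ R₂. Then there exists R̄ such that f(r) = 0 for all r ≥ R̄. -/
open MeasureTheory Metric Set Filter
open scoped ENNReal NNReal symmDiff

lemma gronwall_aux (α c R₂ : ℝ) (hα0 : 0 < α) (hα1 : α < 1) (hc : 0 < c) (g : ℝ → ℝ)
    (hg0 : ∀ R ≥ R₂, 0 ≤ g R)
    (hkey : ∀ a b, R₂ ≤ a → a ≤ b → g b + (b - a) * (c ^ α * g b ^ α) ≤ g a) :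
    ∃ Rb ≥ R₂, g Rb = 0 := by
  set K := c ^ α with hKdef
  have hK : 0 < K := Real.rpow_pos_of_pos hc α
  -- monotonicity
  have hmono : ∀ a b, R₂ ≤ a → a ≤ b → g b ≤ g a := by
    intro a b ha hab
    have h1 := hkey a b ha hab
    have h2 : 0 ≤ (b - a) * (K * g b ^ α) :=
      mul_nonneg (by linarith) (mul_nonneg hK.le (Real.rpow_nonneg (hg0 b (ha.trans hab)) α))
    linarith
  -- halving step
  have halve : ∀ R ≥ R₂, g (R + 2 * g R ^ (1 - α) / K) ≤ g R / 2 := by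
    intro R hR
    have hgR0 : 0 ≤ g R := hg0 R hR
    have hstep0 : 0 ≤ 2 * g R ^ (1 - α) / K := by positivity
    set b := R + 2 * g R ^ (1 - α) / K with hb
    have hRb : R ≤ b := by rw [hb]; linarith
    by_contra hcon
    push_neg at hcon
    have hgbR : g b ≤ g R := hmono R b hR hRb
    have hgRpos : 0 < g R := by linarith
    have hgbpos : 0 < g b := by linarith
    have hkey' := hkey R b hR hRb
    have hba : b - R = 2 * g R ^ (1 - α) / K := by rw [hb]; ring
    have h1 : (g R / 2) ^ α < g b ^ α :=
      Real.rpow_lt_rpow (by positivity) hcon hα0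
    have h2 : (g R / 2) ^ α = g R ^ α / 2 ^ α :=
      Real.div_rpow hgR0 (by norm_num) α
    have hcancel : 2 * g R ^ (1 - α) / K * K = 2 * g R ^ (1 - α) :=
      div_mul_cancel₀ _ hK.ne'
    have hmul : g R ^ (1 - α) * g R ^ α = g R := by
      rw [← Real.rpow_add hgRpos]; norm_num
    have h2lt : (1:ℝ) < 2 ^ (1 - α) := by
      exact (Real.one_lt_rpow_iff_of_pos (by norm_num : (0:ℝ) < 2)).mpr (Or.inl ⟨by norm_num, by linarith⟩)
    have h2α : (2:ℝ) ^ (1 - α) = 2 / 2 ^ α := by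
      rw [Real.rpow_sub (by norm_num), Real.rpow_one]
    have hgα : 0 < g R ^ α := Real.rpow_pos_of_pos hgRpos α
    have h2αpos : (0:ℝ) < 2 ^ α := Real.rpow_pos_of_pos (by norm_num) α
    have hchain : 2 ^ (1 - α) * g R < g R := by
      calc 2 ^ (1 - α) * g R = 2 / 2 ^ α * (g R ^ (1 - α) * g R ^ α) := by rw [h2α, hmul]
        _ = (2 * g R ^ (1 - α)) * (g R ^ α / 2 ^ α) := by ring
        _ = (b - R) * K * ((g R / 2) ^ α) := by rw [hba, hcancel, h2]
        _ ≤ (b - R) * K * (g b ^ α) := by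
            apply mul_le_mul_of_nonneg_left h1.le
            have h3 : 0 ≤ b - R := by linarith
            positivity
        _ = (b - R) * (K * g b ^ α) := by ring
        _ < g b + (b - R) * (K * g b ^ α) := by linarith
        _ ≤ g R := hkey'
    nlinarith
  -- the sequence
  set step : ℝ → ℝ := fun r => 2 * g r ^ (1 - α) / K with hstepdef
  set Rn : ℕ → ℝ := fun n => Nat.rec R₂ (fun _ r => r + step r) n with hRn
  have hRnsucc : ∀ n, Rn (n + 1) = Rn n + step (Rn n) := fun n => rfl
  have hRn0 : Rn 0 = R₂ := rfl
  have hbasic : ∀ n, R₂ ≤ Rn n ∧ g (Rn n) ≤ g R₂ / 2 ^ n := by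
    intro n
    induction n with
    | zero => rw [hRn0]; exact ⟨le_rfl, by norm_num⟩
    | succ n ih =>
      obtain ⟨ih1, ih2⟩ := ih
      have hg0n : 0 ≤ g (Rn n) := hg0 _ ih1
      have hs0 : 0 ≤ step (Rn n) := by simp only [hstepdef]; positivity
      constructor
      · rw [hRnsucc]; linarith
      · have := halve (Rn n) ih1
        rw [hRnsucc]
        calc g (Rn n + step (Rn n)) ≤ g (Rn n) / 2 := this
          _ ≤ g R₂ / 2 ^ n / 2 := by linarith
          _ = g R₂ / 2 ^ (n + 1) := by ring
  set q : ℝ := (2:ℝ) ^ (α - 1) with hq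
  have hq0 : 0 < q := Real.rpow_pos_of_pos (by norm_num) _
  have hq1 : q < 1 := Real.rpow_lt_one_of_one_lt_of_neg (by norm_num) (by linarith)
  have h1q : 0 < 1 - q := by linarith
  set M : ℝ := 2 * g R₂ ^ (1 - α) / K with hM
  have hgR₂ : 0 ≤ g R₂ := hg0 R₂ le_rfl
  have hM0 : 0 ≤ M := by rw [hM]; positivity
  -- step bound
  have hstepbd : ∀ n, step (Rn n) ≤ M * q ^ n := by
    intro n
    obtain ⟨h1, h2⟩ := hbasic n
    have hg0n : 0 ≤ g (Rn n) := hg0 _ h1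
    have hr1 : g (Rn n) ^ (1 - α) ≤ (g R₂ / 2 ^ n) ^ (1 - α) :=
      Real.rpow_le_rpow hg0n h2 (by linarith)
    have e1 : ((2:ℝ) ^ n : ℝ) ^ (1 - α) = (2:ℝ) ^ ((n:ℝ) * (1 - α)) := by
      rw [← Real.rpow_natCast 2 n, ← Real.rpow_mul (by norm_num)]
    have e2 : q ^ n = (2:ℝ) ^ ((α - 1) * (n:ℝ)) := by
      rw [hq, ← Real.rpow_natCast ((2:ℝ) ^ (α - 1)) n, ← Real.rpow_mul (by norm_num)]
    have e3 : (2:ℝ) ^ (-((n:ℝ) * (1 - α))) = 2 ^ ((α - 1) * (n:ℝ)) := by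
      congr 1; ring
    have hr2 : (g R₂ / 2 ^ n) ^ (1 - α) = g R₂ ^ (1 - α) * q ^ n := by
      rw [Real.div_rpow hgR₂ (by positivity) (1 - α), e1, div_eq_mul_inv,
        ← Real.rpow_neg (by norm_num), e3, e2]
    have hstep' : step (Rn n) ≤ 2 * (g R₂ ^ (1 - α) * q ^ n) / K := by
      simp only [hstepdef]
      rw [div_le_div_iff_of_pos_right hK]
      rw [← hr2]; linarith
    calc step (Rn n) ≤ 2 * (g R₂ ^ (1 - α) * q ^ n) / K := hstep'
      _ = M * q ^ n := by rw [hM]; ring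
  -- uniform bound on Rn
  have hRnbd : ∀ n, Rn n + M * q ^ n / (1 - q) ≤ R₂ + M / (1 - q) := by
    intro n
    induction n with
    | zero => rw [hRn0]; norm_num
    | succ n ih =>
      have h1 := hstepbd n
      have key : M * q ^ n + M * q ^ (n + 1) / (1 - q) = M * q ^ n / (1 - q) := by
        field_simp
        ring
      rw [hRnsucc]
      nlinarith [h1, key, ih]
  set Rb : ℝ := R₂ + M / (1 - q) with hRb
  have hRbge : R₂ ≤ Rb := by
    have h4 : 0 ≤ M / (1 - q) := div_nonneg hM0 h1q.le
    rw [hRb]; linarith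
  refine ⟨Rb, hRbge, ?_⟩
  have hub : ∀ n, g Rb ≤ g R₂ / 2 ^ n := by
    intro n
    obtain ⟨h1, h2⟩ := hbasic n
    have hle : Rn n ≤ Rb := by
      have h5 := hRnbd n
      have h3 : 0 ≤ M * q ^ n / (1 - q) :=
        div_nonneg (mul_nonneg hM0 (pow_nonneg hq0.le n)) h1q.le
      rw [hRb]; linarith
    exact (hmono _ _ h1 hle).trans h2
  have hlim : Tendsto (fun n : ℕ => g R₂ / 2 ^ n) atTop (nhds 0) :=
    tendsto_const_nhds.div_atTop (tendsto_pow_atTop_atTop_of_one_lt (by norm_num : (1:ℝ) < 2))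
  have hle0 : g Rb ≤ 0 := ge_of_tendsto' hlim hub
  exact le_antisymm hle0 (hg0 Rb hRbge)

theorem extinction_of_integrodifferential_ineq (N : ℕ) (hN : 1 ≤ N) (s : ℝ)
    (hs : s ∈ Set.Ioo (0:ℝ) 1) (c R₂ : ℝ) (hc : 0 < c) (hR₂ : 0 ≤ R₂)
    (f : ℝ → ℝ) (hf0 : ∀ r ≥ (0:ℝ), 0 ≤ f r) (hmono : AntitoneOn f (Set.Ici 0))
    (hcont : ContinuousOn f (Set.Ici 0))
    (hlim : Tendsto f atTop (nhds 0))
    (hint : IntegrableOn (fun r => f r ^ (((N : ℝ) - s) / N)) (Set.Ioi R₂))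
    (hineq : ∀ R ≥ R₂, c * ∫ r in Set.Ioi R, f r ^ (((N : ℝ) - s) / N) ≤ f R) :
    ∃ Rbar : ℝ, ∀ r ≥ Rbar, f r = 0 := by
  obtain ⟨hs0, hs1⟩ := hs
  have hN0 : (0:ℝ) < N := by exact_mod_cast Nat.lt_of_lt_of_le Nat.zero_lt_one hN
  have hN1 : (1:ℝ) ≤ N := by exact_mod_cast hN
  set α : ℝ := ((N : ℝ) - s) / N with hα
  have hα0 : 0 < α := div_pos (by linarith) hN0
  have hα1 : α < 1 := (div_lt_one hN0).mpr (by linarith)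
  set g : ℝ → ℝ := fun R => ∫ r in Set.Ioi R, f r ^ α with hg
  -- basic integrability
  have hgint : ∀ R, R₂ ≤ R → IntegrableOn (fun r => f r ^ α) (Set.Ioi R) :=
    fun R hR => hint.mono_set (Set.Ioi_subset_Ioi hR)
  have hIoc : ∀ a b : ℝ, R₂ ≤ a → IntegrableOn (fun r => f r ^ α) (Set.Ioc a b) :=
    fun a b ha => (hgint a ha).mono_set Set.Ioc_subset_Ioi_self
  -- nonnegativity
  have hfα : ∀ x : ℝ, 0 < x → 0 ≤ f x ^ α := fun x hx => Real.rpow_nonneg (hf0 x hx.le) α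
  have hg0 : ∀ R ≥ R₂, 0 ≤ g R := by
    intro R hR
    exact setIntegral_nonneg measurableSet_Ioi fun x hx => hfα x (lt_of_le_of_lt (hR₂.trans hR) hx)
  -- splitting
  have hsplit : ∀ a b : ℝ, R₂ ≤ a → a ≤ b →
      g a = (∫ r in Set.Ioc a b, f r ^ α) + g b := by
    intro a b ha hab
    have h := setIntegral_union (μ := volume) (f := fun r => f r ^ α)
      (Set.Ioc_disjoint_Ioi le_rfl) measurableSet_Ioi (hIoc a b ha) (hgint b (ha.trans hab))
    simp only [hg]
    rw [← Set.Ioc_union_Ioi_eq_Ioi hab, h]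
  have hgmono : ∀ a b : ℝ, R₂ ≤ a → a ≤ b → g b ≤ g a := by
    intro a b ha hab
    have h := hsplit a b ha hab
    have h2 : 0 ≤ ∫ r in Set.Ioc a b, f r ^ α :=
      setIntegral_nonneg measurableSet_Ioc fun x hx =>
        hfα x (lt_of_le_of_lt (hR₂.trans ha) hx.1)
    linarith
  -- key inequality
  have hkey : ∀ a b : ℝ, R₂ ≤ a → a ≤ b → g b + (b - a) * (c ^ α * g b ^ α) ≤ g a := by
    intro a b ha hab
    have hnn : 0 ≤ g b := hg0 b (ha.trans hab)
    have hconst : ∀ x ∈ Set.Ioc a b, (c * g b) ^ α ≤ f x ^ α := by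
      intro x hx
      have hx2 : R₂ ≤ x := ha.trans hx.1.le
      have h1 : c * g b ≤ c * g x :=
        mul_le_mul_of_nonneg_left (hgmono x b hx2 hx.2) hc.le
      have h2 : c * g x ≤ f x := hineq x hx2
      exact Real.rpow_le_rpow (mul_nonneg hc.le hnn) (h1.trans h2) hα0.le
    have hci : IntegrableOn (fun _ : ℝ => (c * g b) ^ α) (Set.Ioc a b) :=
      integrableOn_const measure_Ioc_lt_top.ne enorm_ne_top
    have hle := setIntegral_mono_on hci (hIoc a b ha) measurableSet_Ioc hconst
    rw [setIntegral_const, measureReal_def, Real.volume_Ioc, ENNReal.toReal_ofReal (by linarith),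
      smul_eq_mul, Real.mul_rpow hc.le hnn] at hle
    have h := hsplit a b ha hab
    linarith
  obtain ⟨Rb, hRbge, hgRb⟩ := gronwall_aux α c R₂ hα0 hα1 hc g hg0 hkey
  refine ⟨Rb + 1, fun r hr => ?_⟩
  have hrR : Rb < r := by linarith
  have hr0 : 0 ≤ r := by linarith [hR₂.trans hRbge]
  have h0 : 0 ≤ f r := hf0 r hr0
  by_contra hne
  have hfr : 0 < f r := lt_of_le_of_ne h0 (Ne.symm hne)
  have hlowpt : ∀ x ∈ Set.Ioc Rb r, f r ^ α ≤ f x ^ α := by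
    intro x hx
    have hx0 : 0 ≤ x := le_of_lt (lt_of_le_of_lt (hR₂.trans hRbge) hx.1)
    have := hmono hx0 hr0 hx.2
    exact Real.rpow_le_rpow h0 this hα0.le
  have hci : IntegrableOn (fun _ : ℝ => f r ^ α) (Set.Ioc Rb r) :=
    integrableOn_const measure_Ioc_lt_top.ne enorm_ne_top
  have hlow := setIntegral_mono_on hci (hIoc Rb r hRbge) measurableSet_Ioc hlowpt
  rw [setIntegral_const, measureReal_def, Real.volume_Ioc, ENNReal.toReal_ofReal (by linarith),
    smul_eq_mul] at hlow
  have hup : (∫ x in Set.Ioc Rb r, f x ^ α) ≤ 0 := by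
    have h := hsplit Rb r hRbge hrR.le
    have h2 := hg0 r (hRbge.trans hrR.le)
    rw [hgRb] at h
    linarith
  have hpos : 0 < f r ^ α := Real.rpow_pos_of_pos hfr α
  nlinarith
end

section
/- Let T : ℝ^N → ℝ^N be a C¹ vector field with compact support, and for t ∈ ℝ let Φ_t(x) = x + tT(x). Then there exists a constant C > 0 (depending on T, N, s) such that for all measurable E with P_s(E) < ∞ and all sufficiently small |t|, P_s(E)(1 − C|t|) ≤ P_s(Φ_t(E)) ≤ P_s(E)(1 + C|t|). -/
open MeasureTheory Metric Set Filter
open scoped ENNReal NNReal symmDiff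

private lemma pow_one_add_le {a : ℝ} (h0 : 0 ≤ a) (h1 : a ≤ 1) (k : ℕ) :
    (1 + a) ^ k ≤ 1 + ((2:ℝ) ^ k - 1) * a := by
  induction k with
  | zero => simp
  | succ k ih =>
    have h2 : (1:ℝ) ≤ 2 ^ k := one_le_pow₀ (by norm_num)
    have h3 : (2:ℝ)^(k+1) = 2^k*2 := by ring
    calc (1+a)^(k+1) = (1+a)^k * (1+a) := by ring
    _ ≤ (1 + ((2:ℝ)^k - 1)*a) * (1+a) := by
        apply mul_le_mul_of_nonneg_right ih (by linarith)
    _ ≤ 1 + ((2:ℝ)^(k+1) - 1)*a := by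
        nlinarith [mul_nonneg (mul_nonneg (by linarith : (0:ℝ) ≤ 2^k - 1) h0)
          (by linarith : (0:ℝ) ≤ 1 - a)]

private lemma det_bounds {N : ℕ} (hN : 0 < N)
    (B : EuclideanSpace ℝ (Fin N) →L[ℝ] EuclideanSpace ℝ (Fin N)) {ε : ℝ}
    (hε0 : 0 ≤ ε) (hε1 : ε < 1) (h : ∀ x, ‖B x - x‖ ≤ ε * ‖x‖) :
    (1 - ε) ^ N ≤ |B.det| ∧ |B.det| ≤ (1 + ε) ^ N := by
  have hfr : Module.finrank ℝ (EuclideanSpace ℝ (Fin N)) = N := finrank_euclideanSpace_fin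
  set μ : Measure (EuclideanSpace ℝ (Fin N)) := volume with hμ
  have hup : ∀ x, ‖B x‖ ≤ (1 + ε) * ‖x‖ := by
    intro x
    have h1 := h x
    have h2 : ‖B x‖ ≤ ‖B x - x‖ + ‖x‖ := by
      simpa using norm_add_le (B x - x) x
    nlinarith [norm_nonneg x]
  have hlow : ∀ x, (1 - ε) * ‖x‖ ≤ ‖B x‖ := by
    intro x
    have h1 := h x
    have h2 : ‖x‖ - ‖B x‖ ≤ ‖B x - x‖ := by
      simpa [norm_sub_rev] using norm_sub_norm_le x (B x)
    nlinarith
  have hball : μ (ball 0 1) ≠ 0 := (measure_ball_pos μ 0 one_pos).ne'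
  have hballt : μ (ball 0 1) ≠ ⊤ := measure_ball_lt_top.ne
  have himg : μ (B '' closedBall 0 1)
      = ENNReal.ofReal |B.det| * μ (closedBall 0 1) :=
    μ.addHaar_image_continuousLinearMap B _
  have hcb1 : μ (closedBall (0:EuclideanSpace ℝ (Fin N)) 1) = μ (ball 0 1) := by
    rw [μ.addHaar_closedBall _ zero_le_one]; simp
  constructor
  · -- lower bound
    have hker : ∀ x, B x = 0 → x = 0 := by
      intro x hx
      have h2 := hlow x
      rw [hx, norm_zero] at h2
      have : ‖x‖ = 0 := le_antisymm (by nlinarith) (norm_nonneg x)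
      simpa using this
    have hinj : Function.Injective B := by
      intro a b hab
      have : B (a - b) = 0 := by rw [map_sub, hab, sub_self]
      exact sub_eq_zero.mp (hker _ this)
    have hsurj : Function.Surjective B := by
      have := LinearMap.injective_iff_surjective
        (f := (B : EuclideanSpace ℝ (Fin N) →ₗ[ℝ] EuclideanSpace ℝ (Fin N)))
      exact this.mp hinj
    have hsub2 : closedBall (0:EuclideanSpace ℝ (Fin N)) (1-ε) ⊆ B '' closedBall 0 1 := by
      intro y hy
      obtain ⟨x, rfl⟩ := hsurj y
      refine ⟨x, ?_, rfl⟩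
      simp only [mem_closedBall, dist_zero_right] at *
      have := hlow x
      nlinarith [norm_nonneg x]
    have h2 : ENNReal.ofReal ((1-ε)^N) * μ (ball 0 1) ≤ ENNReal.ofReal |B.det| * μ (ball 0 1) := by
      calc ENNReal.ofReal ((1-ε)^N) * μ (ball 0 1)
          = μ (closedBall 0 (1-ε)) := by rw [μ.addHaar_closedBall _ (by linarith), hfr]
      _ ≤ μ (B '' closedBall 0 1) := measure_mono hsub2
      _ = ENNReal.ofReal |B.det| * μ (ball 0 1) := by rw [himg, hcb1]
    have h3 := (ENNReal.mul_le_mul_iff_left hball hballt).mp h2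
    exact (ENNReal.ofReal_le_ofReal_iff (abs_nonneg _)).mp h3
  · -- upper bound
    have hsub : B '' closedBall 0 1 ⊆ closedBall 0 (1+ε) := by
      rintro _ ⟨x, hx, rfl⟩
      simp only [mem_closedBall, dist_zero_right] at *
      have := hup x
      nlinarith [norm_nonneg (B x)]
    have h1 : ENNReal.ofReal |B.det| * μ (ball 0 1) ≤ ENNReal.ofReal ((1+ε)^N) * μ (ball 0 1) := by
      calc ENNReal.ofReal |B.det| * μ (ball 0 1)
          = μ (B '' closedBall 0 1) := by rw [himg, hcb1]
      _ ≤ μ (closedBall 0 (1+ε)) := measure_mono hsub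
      _ = ENNReal.ofReal ((1+ε)^N) * μ (ball 0 1) := by
          rw [μ.addHaar_closedBall _ (by linarith), hfr]
    have h3 := (ENNReal.mul_le_mul_iff_left hball hballt).mp h1
    exact (ENNReal.ofReal_le_ofReal_iff (by positivity)).mp h3

set_option maxHeartbeats 2000000 in
theorem fracPer_perturbation_estimate (N : ℕ) (hN : 0 < N) (s : ℝ) (hs : s ∈ Set.Ioo (0:ℝ) 1)
    (T : EuclideanSpace ℝ (Fin N) → EuclideanSpace ℝ (Fin N))
    (hT : ContDiff ℝ 1 T) (hTc : HasCompactSupport T) :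
    ∃ C > (0:ℝ), ∃ δ > (0:ℝ), ∀ t : ℝ, |t| < δ →
      ∀ E : Set (EuclideanSpace ℝ (Fin N)), MeasurableSet E → fracPer N s E ≠ ⊤ →
        ENNReal.ofReal (1 - C * |t|) * fracPer N s E ≤
            fracPer N s ((fun x => x + t • T x) '' E) ∧
          fracPer N s ((fun x => x + t • T x) '' E) ≤
            ENNReal.ofReal (1 + C * |t|) * fracPer N s E := by
  classical
  obtain ⟨C₀, hC₀⟩ := (hTc.fderiv ℝ).exists_bound_of_continuous (hT.continuous_fderiv one_ne_zero)
  set M : ℝ := max C₀ 0 + 1 with hM_def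
  have hM : 0 < M := by positivity
  have hDbound : ∀ x, ‖fderiv ℝ T x‖ ≤ M := by
    intro x
    have h1 : ‖fderiv ℝ T x‖ ≤ max C₀ 0 := (hC₀ x).trans (le_max_left _ _)
    linarith
  set Mnn : ℝ≥0 := ⟨M, hM.le⟩ with hMnn_def
  have hLip : LipschitzWith Mnn T := by
    apply lipschitzWith_of_nnnorm_fderiv_le (hT.differentiable one_ne_zero)
    intro x
    rw [← NNReal.coe_le_coe, coe_nnnorm]
    exact hDbound x
  have hTlipR : ∀ x y, ‖T x - T y‖ ≤ M * ‖x - y‖ := by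
    intro x y
    have := hLip.dist_le_mul x y
    rw [dist_eq_norm, dist_eq_norm] at this
    exact this
  refine ⟨((2:ℝ) ^ (3*N+2) + (3*(N:ℝ)+1)) * M, by positivity, 1/(2*M), by positivity, ?_⟩
  intro t ht E hE _hfin
  set C : ℝ := ((2:ℝ) ^ (3*N+2) + (3*(N:ℝ)+1)) * M with hC_def
  set ε : ℝ := M * |t| with hε_def
  have hε0 : 0 ≤ ε := by positivity
  have hεhalf : ε ≤ 1/2 := by
    have h1 : M * |t| ≤ M * (1/(2*M)) := mul_le_mul_of_nonneg_left ht.le hM.le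
    have h2 : M * (1/(2*M)) = 1/2 := by field_simp
    rw [hε_def]; linarith
  have hε1 : ε < 1 := by linarith
  set p : ℝ := (N : ℝ) + s with hp_def
  have hp : 0 < p := by
    have h1 := hs.1
    have h2 : (0:ℝ) ≤ (N:ℝ) := Nat.cast_nonneg N
    rw [hp_def]; linarith
  have hpN1 : p ≤ (N:ℝ) + 1 := by rw [hp_def]; linarith [hs.2.le]
  set f : EuclideanSpace ℝ (Fin N) → EuclideanSpace ℝ (Fin N) := fun x => x + t • T x
    with hf_def
  set f' : EuclideanSpace ℝ (Fin N) → EuclideanSpace ℝ (Fin N) →L[ℝ] EuclideanSpace ℝ (Fin N) :=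
    fun x => ContinuousLinearMap.id ℝ _ + t • fderiv ℝ T x with hf'_def
  have hder : ∀ x, HasFDerivAt f (f' x) x := by
    intro x
    exact (hasFDerivAt_id x).add (((hT.differentiable one_ne_zero x).hasFDerivAt).const_smul t)
  have hB : ∀ x z, ‖f' x z - z‖ ≤ ε * ‖z‖ := by
    intro x z
    simp only [hf'_def, ContinuousLinearMap.add_apply, ContinuousLinearMap.coe_id', id_eq,
      ContinuousLinearMap.coe_smul', Pi.smul_apply, add_sub_cancel_left]
    rw [norm_smul, Real.norm_eq_abs]
    calc |t| * ‖fderiv ℝ T x z‖ ≤ |t| * (M * ‖z‖) := by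
          apply mul_le_mul_of_nonneg_left _ (abs_nonneg t)
          exact ((fderiv ℝ T x).le_opNorm z).trans
            (mul_le_mul_of_nonneg_right (hDbound x) (norm_nonneg z))
    _ = ε * ‖z‖ := by rw [hε_def]; ring
  have hdet := fun x => det_bounds hN (f' x) hε0 hε1 (hB x)
  have hfsub : ∀ x y, f x - f y = (x - y) + t • (T x - T y) := by
    intro x y
    simp only [hf_def, smul_sub]
    abel
  have hsmul_bound : ∀ x y, ‖t • (T x - T y)‖ ≤ ε * ‖x - y‖ := by
    intro x y
    rw [norm_smul, Real.norm_eq_abs, hε_def]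
    have h1 := hTlipR x y
    have h2 : |t| * ‖T x - T y‖ ≤ |t| * (M * ‖x - y‖) :=
      mul_le_mul_of_nonneg_left h1 (abs_nonneg t)
    linarith [h2, mul_comm (|t|) M]
    
  have hfub : ∀ x y, ‖f x - f y‖ ≤ (1+ε) * ‖x - y‖ := by
    intro x y
    rw [hfsub]
    calc ‖(x-y) + t•(T x - T y)‖ ≤ ‖x-y‖ + ‖t•(T x - T y)‖ := norm_add_le _ _
    _ ≤ ‖x-y‖ + ε * ‖x-y‖ := by linarith [hsmul_bound x y]
    _ = (1+ε)*‖x-y‖ := by ring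
  have hflb : ∀ x y, (1-ε) * ‖x - y‖ ≤ ‖f x - f y‖ := by
    intro x y
    have h1 : ‖x-y‖ - ‖t•(T x - T y)‖ ≤ ‖(x-y) + t•(T x - T y)‖ := by
      have h0 := norm_sub_norm_le (x-y) ((x-y)+t•(T x - T y))
      have h2 : (x-y) - ((x-y)+t•(T x - T y)) = -(t•(T x - T y)) := by abel
      rw [h2, norm_neg] at h0
      linarith
    rw [hfsub]
    linarith [hsmul_bound x y]
  have hinjf : Function.Injective f := by
    intro a b hab
    have h1 := hflb a b
    rw [hab, sub_self, norm_zero] at h1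
    have h2 : ‖a - b‖ ≤ 0 := by nlinarith [norm_nonneg (a-b)]
    have := le_antisymm h2 (norm_nonneg _)
    rwa [norm_eq_zero, sub_eq_zero] at this
  have hsurjf : Function.Surjective f := by
    intro y
    set g : EuclideanSpace ℝ (Fin N) → EuclideanSpace ℝ (Fin N) :=
      fun x => y - t • T x with hg_def
    have hgl : LipschitzWith (‖t‖₊ * Mnn) g := by
      apply LipschitzWith.of_dist_le_mul
      intro a b
      simp only [hg_def, dist_eq_norm]
      have h1 : (y - t•T a) - (y - t•T b) = t • (T b - T a) := by
        rw [smul_sub]; abel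
      rw [h1, norm_smul, Real.norm_eq_abs]
      have h2 : ((‖t‖₊ * Mnn : ℝ≥0) : ℝ) = |t| * M := by
        push_cast [hMnn_def]
        show (‖t‖₊:ℝ) * M = |t| * M
        rw [coe_nnnorm, Real.norm_eq_abs]
      rw [h2, mul_assoc]
      apply mul_le_mul_of_nonneg_left _ (abs_nonneg t)
      have := hTlipR b a
      rwa [norm_sub_rev a b]
    have hlt : (‖t‖₊ * Mnn : ℝ≥0) < 1 := by
      rw [← NNReal.coe_lt_coe]
      push_cast [hMnn_def]
      show (‖t‖₊:ℝ) * M < 1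
      rw [coe_nnnorm, Real.norm_eq_abs]
      have : |t| * M = ε := by rw [hε_def]; ring
      rw [this]; linarith
    have hcontr : ContractingWith (‖t‖₊ * Mnn) g := ⟨hlt, hgl⟩
    refine ⟨ContractingWith.fixedPoint g hcontr, ?_⟩
    have hfix := hcontr.fixedPoint_isFixedPt
    simp only [Function.IsFixedPt, hg_def] at hfix
    simp only [hf_def]
    exact eq_sub_iff_add_eq.mp hfix.symm
  have hbij : Function.Bijective f := ⟨hinjf, hsurjf⟩
  have hCoV : ∀ (A : Set (EuclideanSpace ℝ (Fin N))), MeasurableSet A →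
      ∀ (g : EuclideanSpace ℝ (Fin N) → ℝ≥0∞),
      ∫⁻ x in f '' A, g x = ∫⁻ x in A, ENNReal.ofReal |(f' x).det| * g (f x) :=
    fun A hA g => lintegral_image_eq_lintegral_abs_det_fderiv_mul volume hA
      (fun x _ => (hder x).hasFDerivWithinAt) hinjf.injOn g
  have key : fracPer N s (f '' E) =
      ∫⁻ x in E, ENNReal.ofReal |(f' x).det| *
        ∫⁻ v in Eᶜ, ENNReal.ofReal |(f' v).det| * ENNReal.ofReal (1 / ‖f x - f v‖ ^ p) := by
    rw [fracPer, interEnergy, ← Set.image_compl_eq hbij, ← hp_def, hCoV E hE]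
    refine lintegral_congr fun x => ?_
    congr 1
    rw [hCoV Eᶜ hE.compl (fun y => ENNReal.ofReal (1 / ‖f x - y‖ ^ p))]
  have hfracE : fracPer N s E = ∫⁻ x in E, ∫⁻ v in Eᶜ, ENNReal.ofReal (1 / ‖x - v‖ ^ p) := by
    rw [fracPer, interEnergy, ← hp_def]
  -- kernel bounds
  have hkerU : ∀ x v, ENNReal.ofReal (1/‖f x - f v‖^p) ≤
      ENNReal.ofReal ((1+2*ε)^(N+1)) * ENNReal.ofReal (1/‖x-v‖^p) := by
    intro x v
    rcases eq_or_ne x v with rfl | hxv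
    · simp [Real.zero_rpow hp.ne']
    · have hr : 0 < ‖x - v‖ := by
        rw [norm_pos_iff]; exact sub_ne_zero.mpr hxv
      have h1m : (0:ℝ) < 1 - ε := by linarith
      have h2p : (0:ℝ) < 1 + 2*ε := by linarith
      have hR : (1-ε) * ‖x-v‖ ≤ ‖f x - f v‖ := hflb x v
      rw [← ENNReal.ofReal_mul (pow_nonneg h2p.le _)]
      apply ENNReal.ofReal_le_ofReal
      have hrp : (0:ℝ) < ‖x-v‖ ^ p := Real.rpow_pos_of_pos hr p
      have hepp : (0:ℝ) < (1-ε) ^ p := Real.rpow_pos_of_pos h1m p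
      have hRp : ((1-ε) * ‖x-v‖)^p ≤ ‖f x - f v‖^p :=
        Real.rpow_le_rpow (mul_nonneg h1m.le hr.le) hR hp.le
      rw [Real.mul_rpow h1m.le hr.le] at hRp
      have hinv : 1/‖f x - f v‖^p ≤ 1/((1-ε)^p * ‖x-v‖^p) :=
        one_div_le_one_div_of_le (mul_pos hepp hrp) hRp
      refine hinv.trans ?_
      rw [one_div, one_div, mul_inv, mul_comm ((1+2*ε)^(N+1))]
      rw [mul_comm (((1-ε)^p)⁻¹)]
      apply mul_le_mul_of_nonneg_left _ (by positivity)
      -- ((1-ε)^p)⁻¹ ≤ (1+2ε)^(N+1)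
      have e1 : (1-ε)^((N:ℝ)+1) ≤ (1-ε)^p :=
        Real.rpow_le_rpow_of_exponent_ge h1m (by linarith) hpN1
      have e2 : (1-ε)^((N:ℝ)+1) = (1-ε)^(N+1 : ℕ) := by
        rw [← Real.rpow_natCast (1-ε) (N+1)]
        push_cast; ring_nf
      rw [e2] at e1
      have e3 : (1:ℝ) ≤ (1-ε)^(N+1:ℕ) * (1+2*ε)^(N+1:ℕ) := by
        rw [← mul_pow]
        apply one_le_pow₀
        nlinarith
      have hA : (0:ℝ) < (1-ε)^(N+1:ℕ) := pow_pos h1m _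
      calc ((1-ε)^p)⁻¹ ≤ ((1-ε)^(N+1:ℕ))⁻¹ := inv_anti₀ hA e1
      _ ≤ (1+2*ε)^(N+1) := by
            rw [← one_div, div_le_iff₀ hA]
            nlinarith
  have hkerL : ∀ x v, ENNReal.ofReal ((1-ε)^(N+1:ℕ)) * ENNReal.ofReal (1/‖x-v‖^p) ≤
      ENNReal.ofReal (1/‖f x - f v‖^p) := by
    intro x v
    rcases eq_or_ne x v with rfl | hxv
    · simp [Real.zero_rpow hp.ne']
    · have hr : 0 < ‖x - v‖ := by
        rw [norm_pos_iff]; exact sub_ne_zero.mpr hxv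
      have h1m : (0:ℝ) < 1 - ε := by linarith
      have hRl : (1-ε) * ‖x-v‖ ≤ ‖f x - f v‖ := hflb x v
      have hRpos : 0 < ‖f x - f v‖ := lt_of_lt_of_le (by positivity) hRl
      have hRu : ‖f x - f v‖ ≤ (1+ε) * ‖x-v‖ := hfub x v
      have h1p : (0:ℝ) < 1 + ε := by linarith
      rw [← ENNReal.ofReal_mul (pow_nonneg h1m.le _)]
      apply ENNReal.ofReal_le_ofReal
      have hRp : ‖f x - f v‖^p ≤ ((1+ε) * ‖x-v‖)^p :=
        Real.rpow_le_rpow (norm_nonneg _) hRu hp.le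
      rw [Real.mul_rpow (by linarith) hr.le] at hRp
      have hrp : (0:ℝ) < ‖x-v‖ ^ p := Real.rpow_pos_of_pos hr p
      have hRppos : (0:ℝ) < ‖f x - f v‖ ^ p := Real.rpow_pos_of_pos hRpos p
      have hinv : 1/((1+ε)^p * ‖x-v‖^p) ≤ 1/‖f x - f v‖^p :=
        one_div_le_one_div_of_le hRppos hRp
      refine le_trans ?_ hinv
      -- (1-ε)^{N+1} * (1/r^p) ≤ 1/((1+ε)^p * r^p)
      have e1 : (1+ε)^p ≤ (1+ε)^((N:ℝ)+1) :=
        Real.rpow_le_rpow_of_exponent_le (by linarith) hpN1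
      have e2 : (1+ε)^((N:ℝ)+1) = (1+ε)^(N+1 : ℕ) := by
        rw [← Real.rpow_natCast (1+ε) (N+1)]
        push_cast; ring_nf
      rw [e2] at e1
      have hq : (0:ℝ) < (1+ε)^p := Real.rpow_pos_of_pos (by linarith) p
      rw [one_div, one_div, mul_inv]
      apply mul_le_mul_of_nonneg_right _ (inv_nonneg.mpr hrp.le)
      -- (1-ε)^{N+1} ≤ ((1+ε)^p)⁻¹
      have e3 : (1-ε)^(N+1:ℕ) * (1+ε)^(N+1:ℕ) ≤ 1 := by
        rw [← mul_pow]
        apply pow_le_one₀ (by nlinarith) (by nlinarith)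
      have : (1-ε)^(N+1:ℕ) * (1+ε)^p ≤ 1 := by
        calc (1-ε)^(N+1:ℕ) * (1+ε)^p ≤ (1-ε)^(N+1:ℕ) * (1+ε)^(N+1:ℕ) :=
              mul_le_mul_of_nonneg_left e1 (pow_nonneg h1m.le _)
        _ ≤ 1 := e3
      rw [← one_div, le_div_iff₀ hq]
      exact this
  have hDU : ∀ x, ENNReal.ofReal |(f' x).det| ≤ ENNReal.ofReal ((1+2*ε)^N) := by
    intro x
    apply ENNReal.ofReal_le_ofReal
    exact (hdet x).2.trans (pow_le_pow_left₀ (by linarith) (by linarith) N)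
  have hDL : ∀ x, ENNReal.ofReal ((1-ε)^N) ≤ ENNReal.ofReal |(f' x).det| :=
    fun x => ENNReal.ofReal_le_ofReal (hdet x).1
  have h2p : (0:ℝ) < 1 + 2*ε := by linarith
  have h1m : (0:ℝ) < 1 - ε := by linarith
  have hh : (1+2*ε)^(3*N+1) = (1+2*ε)^N * ((1+2*ε)^N * (1+2*ε)^(N+1)) := by
    rw [← pow_add, ← pow_add]; congr 1; omega
  have hhL : (1-ε)^(3*N+1) = (1-ε)^N * ((1-ε)^N * (1-ε)^(N+1)) := by
    rw [← pow_add, ← pow_add]; congr 1; omega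
  have ptU : ∀ x v, ENNReal.ofReal |(f' x).det| * (ENNReal.ofReal |(f' v).det| *
      ENNReal.ofReal (1/‖f x - f v‖^p)) ≤
      ENNReal.ofReal ((1+2*ε)^(3*N+1)) * ENNReal.ofReal (1/‖x-v‖^p) := by
    intro x v
    calc ENNReal.ofReal |(f' x).det| * (ENNReal.ofReal |(f' v).det| *
        ENNReal.ofReal (1/‖f x - f v‖^p))
        ≤ ENNReal.ofReal ((1+2*ε)^N) * (ENNReal.ofReal ((1+2*ε)^N) *
          (ENNReal.ofReal ((1+2*ε)^(N+1)) * ENNReal.ofReal (1/‖x-v‖^p))) :=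
        mul_le_mul' (hDU x) (mul_le_mul' (hDU v) (hkerU x v))
    _ = ENNReal.ofReal ((1+2*ε)^(3*N+1)) * ENNReal.ofReal (1/‖x-v‖^p) := by
        rw [hh, ENNReal.ofReal_mul (pow_nonneg h2p.le _),
          ENNReal.ofReal_mul (pow_nonneg h2p.le _)]
        ring
  have ptL : ∀ x v, ENNReal.ofReal ((1-ε)^(3*N+1)) * ENNReal.ofReal (1/‖x-v‖^p) ≤
      ENNReal.ofReal |(f' x).det| * (ENNReal.ofReal |(f' v).det| *
      ENNReal.ofReal (1/‖f x - f v‖^p)) := by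
    intro x v
    calc ENNReal.ofReal ((1-ε)^(3*N+1)) * ENNReal.ofReal (1/‖x-v‖^p)
        = ENNReal.ofReal ((1-ε)^N) * (ENNReal.ofReal ((1-ε)^N) *
          (ENNReal.ofReal ((1-ε)^(N+1)) * ENNReal.ofReal (1/‖x-v‖^p))) := by
          rw [hhL, ENNReal.ofReal_mul (pow_nonneg h1m.le _),
            ENNReal.ofReal_mul (pow_nonneg h1m.le _)]
          ring
    _ ≤ _ := mul_le_mul' (hDL x) (mul_le_mul' (hDL v) (hkerL x v))
  have hupper : fracPer N s (f '' E) ≤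
      ENNReal.ofReal ((1+2*ε)^(3*N+1)) * fracPer N s E := by
    rw [key, hfracE,
      ← lintegral_const_mul' (ENNReal.ofReal ((1+2*ε)^(3*N+1))) _ ENNReal.ofReal_ne_top]
    apply lintegral_mono
    intro x
    beta_reduce
    rw [← lintegral_const_mul' _ _ ENNReal.ofReal_ne_top,
      ← lintegral_const_mul' _ _ ENNReal.ofReal_ne_top]
    apply lintegral_mono
    intro v
    exact ptU x v
  have hlower : ENNReal.ofReal ((1-ε)^(3*N+1)) * fracPer N s E ≤ fracPer N s (f '' E) := by
    rw [key, hfracE, ← lintegral_const_mul' _ _ ENNReal.ofReal_ne_top]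
    apply lintegral_mono
    intro x
    beta_reduce
    rw [← lintegral_const_mul' _ _ ENNReal.ofReal_ne_top,
      ← lintegral_const_mul' _ _ ENNReal.ofReal_ne_top]
    apply lintegral_mono
    intro v
    exact ptL x v
  constructor
  · refine le_trans (mul_le_mul' ?_ le_rfl) hlower
    apply ENNReal.ofReal_le_ofReal
    have hCt : ((3:ℝ)*N+1) * ε ≤ C * |t| := by
      rw [hε_def, hC_def]
      have h2 : (0:ℝ) ≤ M * |t| := by positivity
      nlinarith [mul_nonneg (pow_nonneg (by norm_num : (0:ℝ) ≤ 2) (3*N+2)) h2]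
    have hber : (1:ℝ) - (3*N+1)*ε ≤ (1-ε)^(3*N+1) := by
      have h9 := one_add_mul_le_pow (by linarith : (-2:ℝ) ≤ -ε) (3*N+1)
      push_cast at h9
      have h7 : (1:ℝ) + -ε = 1 - ε := by ring
      rw [h7] at h9
      linarith
    linarith
  · refine le_trans hupper (mul_le_mul' ?_ le_rfl)
    apply ENNReal.ofReal_le_ofReal
    have hb := pow_one_add_le (by positivity : (0:ℝ) ≤ 2*ε) (by linarith) (3*N+1)
    have h4 : (2:ℝ)^(3*N+2) = 2^(3*N+1) * 2 := by rw [pow_succ]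
    have hCt : ((2:ℝ)^(3*N+1)-1) * (2*ε) ≤ C * |t| := by
      rw [hε_def, hC_def]
      have h2 : (0:ℝ) ≤ M * |t| := by positivity
      have h5 : (0:ℝ) ≤ 3*(N:ℝ)+1 := by positivity
      nlinarith [mul_nonneg h5 h2, h2]
    linarith
end

section
/- Suppose (Gᵢ)_{i∈I} is a countable family of measurable sets of finite fractional perimeter with at least two of them having positive measure, and ℱ(G) = P_s(G) − ∫_G g dx with g being ℤ^N-periodic. Let (wᵢ) ⊆ ℤ^N be such that the translates Gᵢ + wᵢ are pairwise disjoint (up to null sets) with F = ∪ᵢ (Gᵢ + wᵢ). Then ℱ(F) < ∑ᵢ ℱ(Gᵢ). -/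
open MeasureTheory Metric Set Filter
open scoped ENNReal NNReal symmDiff Topology

set_option maxHeartbeats 1000000

/-- The point of `EuclideanSpace ℝ (Fin N)` with integer coordinates `w`. -/
noncomputable def intVec (N : ℕ) (w : Fin N → ℤ) : EuclideanSpace ℝ (Fin N) :=
  (EuclideanSpace.equiv (Fin N) ℝ).symm (fun i => (w i : ℝ))

section Aux

variable {N : ℕ} {s : ℝ}

local notation "E" => EuclideanSpace ℝ (Fin N)

lemma ker_measurable (hq : 0 ≤ (N : ℝ) + s) :
    Measurable fun p : E × E => ENNReal.ofReal (1 / ‖p.1 - p.2‖ ^ ((N : ℝ) + s)) := by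
  apply ENNReal.measurable_ofReal.comp
  exact measurable_const.div
    ((Real.continuous_rpow_const hq).measurable.comp (measurable_fst.sub measurable_snd).norm)

lemma inner_measurable (hq : 0 ≤ (N : ℝ) + s) (B : Set E) :
    Measurable fun x : E => ∫⁻ y in B, ENNReal.ofReal (1 / ‖x - y‖ ^ ((N : ℝ) + s)) :=
  (ker_measurable hq).lintegral_prod_right'

lemma interEnergy_mono_right {A B B' : Set E} (h : B ⊆ B') :
    interEnergy N s A B ≤ interEnergy N s A B' :=
  lintegral_mono fun _ => lintegral_mono_set h

lemma interEnergy_union_right (hq : 0 ≤ (N : ℝ) + s) {A B₁ B₂ : Set E}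
    (hB₂ : MeasurableSet B₂) (hd : Disjoint B₁ B₂) :
    interEnergy N s A (B₁ ∪ B₂) = interEnergy N s A B₁ + interEnergy N s A B₂ := by
  unfold interEnergy
  have : ∀ x : E, (∫⁻ y in B₁ ∪ B₂, ENNReal.ofReal (1 / ‖x - y‖ ^ ((N : ℝ) + s)))
      = (∫⁻ y in B₁, ENNReal.ofReal (1 / ‖x - y‖ ^ ((N : ℝ) + s)))
        + ∫⁻ y in B₂, ENNReal.ofReal (1 / ‖x - y‖ ^ ((N : ℝ) + s)) := fun x =>
    lintegral_union hB₂ hd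
  simp_rw [this]
  exact lintegral_add_left ((inner_measurable hq B₁)) _

lemma interEnergy_congr_right {A B B' : Set E} (h : B =ᵐ[volume] B') :
    interEnergy N s A B = interEnergy N s A B' := by
  unfold interEnergy
  have := Measure.restrict_congr_set (μ := (volume : Measure E)) h
  simp_rw [this]

lemma interEnergy_pos (hN : 0 < N) (hs : 0 < s) {A B : Set E}
    (hA : 0 < volume A) (hB : 0 < volume B) : 0 < interEnergy N s A B := by
  have hq : (0:ℝ) < (N : ℝ) + s := by positivity
  have hNontriv : Nontrivial E := by
    refine ⟨0, EuclideanSpace.single ⟨0, hN⟩ 1, fun h => ?_⟩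
    have := congrArg (fun v : E => v ⟨0, hN⟩) h.symm
    simp [EuclideanSpace.single_apply] at this
  haveI := hNontriv
  haveI : NeBot (𝓝[≠] (0 : E)) := Module.punctured_nhds_neBot ℝ E 0
  -- inner integral is positive for every x
  have hker : ∀ x y : E, y ≠ x →
      0 < ENNReal.ofReal (1 / ‖x - y‖ ^ ((N : ℝ) + s)) := by
    intro x y hxy
    apply ENNReal.ofReal_pos.2
    have : (0:ℝ) < ‖x - y‖ := by
      rw [norm_pos_iff, sub_ne_zero]; exact fun h => hxy h.symm
    positivity
  have hinner : ∀ x : E,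
      0 < ∫⁻ y in B, ENNReal.ofReal (1 / ‖x - y‖ ^ ((N : ℝ) + s)) := by
    intro x
    by_contra h
    push_neg at h
    have h0 : (∫⁻ y in B, ENNReal.ofReal (1 / ‖x - y‖ ^ ((N : ℝ) + s))) = 0 :=
      le_antisymm h zero_le
    have hmeas : Measurable fun y : E => ENNReal.ofReal (1 / ‖x - y‖ ^ ((N : ℝ) + s)) :=
      ENNReal.measurable_ofReal.comp (measurable_const.div
        ((Real.continuous_rpow_const hq.le).measurable.comp
          (measurable_const.sub measurable_id).norm))
    rw [lintegral_eq_zero_iff hmeas] at h0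
    have h1 : (volume.restrict B) {y : E | ENNReal.ofReal (1 / ‖x - y‖ ^ ((N : ℝ) + s)) ≠ 0}
        = 0 := h0
    have h2 : ({x}ᶜ : Set E) ⊆ {y : E | ENNReal.ofReal (1 / ‖x - y‖ ^ ((N : ℝ) + s)) ≠ 0} :=
      fun y hy => (hker x y hy).ne'
    have h3 : (volume.restrict B) ({x}ᶜ : Set E) = 0 :=
      le_antisymm (le_trans (measure_mono h2) h1.le) zero_le
    rw [Measure.restrict_apply (measurableSet_singleton x).compl] at h3
    have h4 : volume (B \ {x}) = 0 := by
      rw [show B \ {x} = {x}ᶜ ∩ B by rw [diff_eq, inter_comm]]; exact h3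
    have h5 : volume B = 0 := by
      have := measure_diff_null (s := B) (t := ({x} : Set E)) (measure_singleton (μ := volume) x)
      rw [this] at h4; exact h4
    exact hB.ne' h5
  -- outer integral positive
  rw [show interEnergy N s A B = ∫⁻ x in A,
      (∫⁻ y in B, ENNReal.ofReal (1 / ‖x - y‖ ^ ((N : ℝ) + s))) from rfl]
  rw [lintegral_pos_iff_support (inner_measurable hq.le B)]
  have : Function.support (fun x : E => ∫⁻ y in B,
      ENNReal.ofReal (1 / ‖x - y‖ ^ ((N : ℝ) + s))) = univ :=
    eq_univ_of_forall fun x => (hinner x).ne'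
  rw [this, Measure.restrict_apply_univ]
  exact hA

-- translation lemmas
lemma image_add_eq_preimage (v : E) (A : Set E) :
    (fun x : E => x + v) '' A = (fun x : E => x - v) ⁻¹' A := by
  ext x
  constructor
  · rintro ⟨a, ha, rfl⟩; simpa using ha
  · intro h; exact ⟨x - v, h, by simp⟩

lemma volume_translate (v : E) {A : Set E} (hA : MeasurableSet A) :
    volume ((fun x : E => x + v) '' A) = volume A := by
  rw [image_add_eq_preimage]
  exact (measurePreserving_sub_right volume v).measure_preimage hA.nullMeasurableSet

lemma measurableSet_translate (v : E) {A : Set E} (hA : MeasurableSet A) :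
    MeasurableSet ((fun x : E => x + v) '' A) := by
  rw [image_add_eq_preimage]
  exact hA.preimage (measurable_id.sub measurable_const)

lemma fracPer_translate (v : E) (A : Set E) :
    fracPer N s ((fun x : E => x + v) '' A) = fracPer N s A := by
  have hmp : MeasurePreserving (fun x : E => x + v) volume volume :=
    measurePreserving_add_right volume v
  have hemb : MeasurableEmbedding (fun x : E => x + v) :=
    (MeasurableEquiv.addRight v).measurableEmbedding
  have hcompl : ((fun x : E => x + v) '' A)ᶜ = (fun x : E => x + v) '' Aᶜ :=
    (Set.image_compl_eq (Equiv.addRight v).bijective).symm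
  unfold fracPer interEnergy
  rw [hcompl]
  rw [← hmp.setLIntegral_comp_emb hemb _ A]
  congr 1
  ext x
  rw [← hmp.setLIntegral_comp_emb hemb _ Aᶜ]
  simp [add_sub_add_right_eq_sub]

end Aux

theorem strict_subadditivity_periodic (N : ℕ) (hN : 0 < N) (s : ℝ) (hs : s ∈ Set.Ioo (0:ℝ) 1)
    (g : EuclideanSpace ℝ (Fin N) → ℝ) (hgmeas : Measurable g)
    (M : ℝ) (hg : ∀ x, |g x| ≤ M)
    (hper : ∀ (x : EuclideanSpace ℝ (Fin N)) (w : Fin N → ℤ), g (x + intVec N w) = g x)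
    (G : ℕ → Set (EuclideanSpace ℝ (Fin N))) (hGm : ∀ i, MeasurableSet (G i))
    (hGfin : ∀ i, fracPer N s (G i) ≠ ⊤)
    (hPsum : ∑' i, fracPer N s (G i) ≠ ⊤) (hVsum : ∑' i, volume (G i) ≠ ⊤)
    (htwo : ∃ i j, i ≠ j ∧ 0 < volume (G i) ∧ 0 < volume (G j))
    (w : ℕ → Fin N → ℤ)
    (hdisj : ∀ i j, i ≠ j →
      volume (((fun x => x + intVec N (w i)) '' G i) ∩
        ((fun x => x + intVec N (w j)) '' G j)) = 0) :
    (fracPer N s (⋃ i, (fun x => x + intVec N (w i)) '' G i)).toReal -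
        ∫ x in ⋃ i, (fun x => x + intVec N (w i)) '' G i, g x <
      ∑' i, ((fracPer N s (G i)).toReal - ∫ x in G i, g x) := by
  have hq : (0:ℝ) < (N : ℝ) + s := by have := hs.1; positivity
  set v : ℕ → EuclideanSpace ℝ (Fin N) := fun i => intVec N (w i) with hv
  set F : ℕ → Set (EuclideanSpace ℝ (Fin N)) := fun i => (fun x => x + v i) '' G i with hF
  set U : Set (EuclideanSpace ℝ (Fin N)) := ⋃ i, F i with hU
  have hFm : ∀ i, MeasurableSet (F i) := fun i => measurableSet_translate (v i) (hGm i)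
  have hFvol : ∀ i, volume (F i) = volume (G i) := fun i => volume_translate (v i) (hGm i)
  have hFP : ∀ i, fracPer N s (F i) = fracPer N s (G i) := fun i => fracPer_translate (v i) (G i)
  have hAED : Pairwise (Function.onFun (AEDisjoint volume) F) := fun i j hij => hdisj i j hij
  obtain ⟨i₀, j₀, hij, hGi₀, hGj₀⟩ := htwo
  -- key ENNReal inequality
  set ε : ℝ≥0∞ := interEnergy N s (F i₀) (F j₀ \ F i₀) with hε
  have hUm : MeasurableSet U := MeasurableSet.iUnion hFm
  have hsplit : fracPer N s U = ∑' i, interEnergy N s (F i) Uᶜ := by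
    unfold fracPer interEnergy
    exact lintegral_iUnion₀ (fun i => (hFm i).nullMeasurableSet) hAED _
  have hterm : ∀ i, interEnergy N s (F i) Uᶜ ≤ fracPer N s (F i) := fun i =>
    interEnergy_mono_right (compl_subset_compl.2 (subset_iUnion F i))
  have hterm₀ : interEnergy N s (F i₀) Uᶜ + ε ≤ fracPer N s (F i₀) := by
    rw [hε, ← interEnergy_union_right hq.le ((hFm j₀).diff (hFm i₀))
      (disjoint_left.2 fun {x} hx hx2 => (mem_compl_iff U x).mp hx (mem_iUnion.2 ⟨j₀, hx2.1⟩))]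
    apply interEnergy_mono_right
    apply union_subset (compl_subset_compl.2 (subset_iUnion F i₀))
    intro x hx
    exact fun hx2 => hx.2 hx2
  have hkey : fracPer N s U + ε ≤ ∑' i, fracPer N s (F i) := by
    rw [hsplit, ENNReal.tsum_eq_add_tsum_ite i₀, ENNReal.tsum_eq_add_tsum_ite (f := fun i => fracPer N s (F i)) i₀]
    rw [add_right_comm]
    exact add_le_add hterm₀ (ENNReal.tsum_le_tsum fun i => by
      by_cases h : i = i₀ <;> simp [h, hterm i])
  have hsumF : ∑' i, fracPer N s (F i) = ∑' i, fracPer N s (G i) := by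
    simp_rw [hFP]
  rw [hsumF] at hkey
  -- positivity of ε
  have hεpos : 0 < ε := by
    apply interEnergy_pos hN hs.1
    · rw [hFvol]; exact hGi₀
    · have : volume (F j₀ \ F i₀) = volume (F j₀) := by
        rw [show F j₀ \ F i₀ = F j₀ \ (F j₀ ∩ F i₀) by rw [diff_self_inter]]
        exact measure_diff_null (hdisj j₀ i₀ hij.symm)
      rw [this, hFvol]; exact hGj₀
  have hεne : ε ≠ ⊤ := by
    have : ε ≤ fracPer N s (F i₀) := by
      apply interEnergy_mono_right
      intro x hx
      exact fun hx2 => hx.2 hx2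
    rw [hFP] at this
    exact (lt_of_le_of_lt this (lt_top_iff_ne_top.2 (hGfin i₀))).ne
  have hPU : fracPer N s U ≠ ⊤ :=
    (lt_of_le_of_lt (le_trans le_self_add hkey) (lt_top_iff_ne_top.2 hPsum)).ne
  -- real perimeter inequality
  have hPR : (fracPer N s U).toReal < ∑' i, (fracPer N s (G i)).toReal := by
    have h1 : (fracPer N s U + ε).toReal ≤ (∑' i, fracPer N s (G i)).toReal :=
      ENNReal.toReal_mono hPsum hkey
    rw [ENNReal.toReal_add hPU hεne] at h1
    rw [← ENNReal.tsum_toReal_eq hGfin]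
    have hεR : 0 < ε.toReal := ENNReal.toReal_pos hεpos.ne' hεne
    linarith
  -- the volume of U is finite
  have hUvol : volume U ≠ ⊤ := by
    refine (lt_of_le_of_lt (measure_iUnion_le F) ?_).ne
    rw [lt_top_iff_ne_top]
    rwa [show ∑' i, volume (F i) = ∑' i, volume (G i) by simp_rw [hFvol]]
  -- integral of g over U
  have hMnonneg : 0 ≤ M := le_trans (abs_nonneg _) (hg 0)
  have hInt : IntegrableOn g U volume := by
    haveI : Fact (volume U < ⊤) := ⟨lt_top_iff_ne_top.2 hUvol⟩
    refine ⟨hgmeas.aestronglyMeasurable, ?_⟩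
    exact HasFiniteIntegral.of_bounded (C := M) (ae_of_all _ fun x => by
      rw [Real.norm_eq_abs]; exact hg x)
  have hIntU : ∫ x in U, g x = ∑' i, ∫ x in F i, g x :=
    integral_iUnion_ae (fun i => (hFm i).nullMeasurableSet) hAED hInt
  have hIntF : ∀ i, ∫ x in F i, g x = ∫ x in G i, g x := by
    intro i
    have hmp : MeasurePreserving (fun x : EuclideanSpace ℝ (Fin N) => x + v i) volume volume :=
      measurePreserving_add_right volume (v i)
    have hemb : MeasurableEmbedding (fun x : EuclideanSpace ℝ (Fin N) => x + v i) :=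
      (MeasurableEquiv.addRight (v i)).measurableEmbedding
    rw [hF]
    rw [hmp.setIntegral_image_emb hemb g (G i)]
    simp_rw [hv, hper]
  rw [hIntU]
  simp_rw [hIntF]
  -- summability
  have hGvol : ∀ i, volume (G i) ≠ ⊤ := fun i => ENNReal.ne_top_of_tsum_ne_top hVsum i
  have hsumP : Summable fun i => (fracPer N s (G i)).toReal := ENNReal.summable_toReal hPsum
  have hsumI : Summable fun i => ∫ x in G i, g x := by
    apply Summable.of_norm_bounded (g := fun i => M * (volume (G i)).toReal)
      ((ENNReal.summable_toReal hVsum).mul_left M)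
    intro i
    apply norm_setIntegral_le_of_norm_le_const (lt_top_iff_ne_top.2 (hGvol i))
    · intro x _
      rw [Real.norm_eq_abs]; exact hg x
  rw [Summable.tsum_sub hsumP hsumI]
  linarith
end
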